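/- Let U = F + G where F : ℝⁿ → ℝ is L-smooth and G : K → ℝ is convex on a closed convex set K ⊆ ℝⁿ. Suppose x, x̃ ∈ K and y ∈ ℝⁿ satisfy the strong-monotonicity inequality −(x̃ − x)ᵀ y + G(x) − G(x̃) ≥ μ̃‖x̃ − x‖². Then for any γ ∈ (0,1], the point v = x + γ(x̃ − x) satisfies U(v) ≤ U(x) − γ(μ̃ − γL/2)‖x̃ − x‖² + γ(∇F(x) − y)ᵀ(x̃ − x). -/

import Mathlib

open scoped RealInnerProductSpace

lemma descent_aux {n : ℕ} (f : EuclideanSpace ℝ (Fin n) → ℝ)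
    (g : EuclideanSpace ℝ (Fin n) → EuclideanSpace ℝ (Fin n)) (L : ℝ)
    (hf : ∀ z, HasGradientAt f (g z) z)
    (hL : ∀ z w, ‖g z - g w‖ ≤ L * ‖z - w‖)
    (a b : EuclideanSpace ℝ (Fin n)) :
    f b ≤ f a + ⟪g a, b - a⟫ + L / 2 * ‖b - a‖ ^ 2 := by
  rcases eq_or_ne b a with rfl | hne
  · simp
  have hLnn : 0 ≤ L := by
    have h := hL a b
    have h2 : (0:ℝ) < ‖a - b‖ := by
      rw [norm_pos_iff]; exact sub_ne_zero.mpr (Ne.symm hne)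
    nlinarith [norm_nonneg (g a - g b)]
  set d := b - a with hdef
  have hcont : Continuous g :=
    (LipschitzWith.of_dist_le_mul (K := L.toNNReal) (fun z w => by
      rw [dist_eq_norm, dist_eq_norm, Real.coe_toNNReal L hLnn]; exact hL z w)).continuous
  have hcurve : Continuous fun t : ℝ => a + t • d :=
    continuous_const.add (continuous_id.smul continuous_const)
  have hφ'cont : Continuous fun t : ℝ => ⟪g (a + t • d), d⟫ :=
    (hcont.comp hcurve).inner continuous_const
  set φ : ℝ → ℝ := fun t => f (a + t • d) with hφdef
  have hderiv : ∀ t : ℝ, HasDerivAt φ ⟪g (a + t • d), d⟫ t := by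
    intro t
    have hc : HasDerivAt (fun t : ℝ => a + t • d) d t := by
      simpa using ((hasDerivAt_id t).smul_const d).const_add a
    have := (hf (a + t • d)).hasFDerivAt.comp_hasDerivAt t hc
    have h2 : HasDerivAt (f ∘ fun t : ℝ => a + t • d) ⟪g (a + t • d), d⟫ t := by simpa [HasGradientAt, HasGradientAtFilter] using this
    exact h2
  have hint : ∫ t in (0:ℝ)..1, ⟪g (a + t • d), d⟫ = φ 1 - φ 0 :=
    intervalIntegral.integral_eq_sub_of_hasDerivAt (fun t _ => hderiv t)
      (hφ'cont.intervalIntegrable 0 1)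
  have hbound : ∀ t ∈ Set.Icc (0:ℝ) 1,
      ⟪g (a + t • d), d⟫ ≤ ⟪g a, d⟫ + t * (L * ‖d‖ ^ 2) := by
    intro t ht
    have h1 : ⟪g (a + t • d) - g a, d⟫ ≤ ‖g (a + t • d) - g a‖ * ‖d‖ :=
      real_inner_le_norm _ _
    have h2 : ‖g (a + t • d) - g a‖ ≤ L * (t * ‖d‖) := by
      have := hL (a + t • d) a
      simpa [norm_smul, abs_of_nonneg ht.1, mul_assoc] using this
    have h3 : ⟪g (a + t • d), d⟫ = ⟪g a, d⟫ + ⟪g (a + t • d) - g a, d⟫ := by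
      rw [inner_sub_left]; ring
    nlinarith [norm_nonneg d, mul_le_mul_of_nonneg_right h2 (norm_nonneg d)]
  have hintle : ∫ t in (0:ℝ)..1, ⟪g (a + t • d), d⟫ ≤
      ∫ t in (0:ℝ)..1, (⟪g a, d⟫ + t * (L * ‖d‖ ^ 2)) := by
    apply intervalIntegral.integral_mono_on zero_le_one (hφ'cont.intervalIntegrable 0 1)
    · exact (continuous_const.add (continuous_id.mul continuous_const)).intervalIntegrable 0 1
    · exact hbound
  have hrhs : ∫ t in (0:ℝ)..1, (⟪g a, d⟫ + t * (L * ‖d‖ ^ 2)) =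
      ⟪g a, d⟫ + L / 2 * ‖d‖ ^ 2 := by
    have i1 : IntervalIntegrable (fun _ : ℝ => ⟪g a, d⟫) MeasureTheory.volume 0 1 :=
      continuous_const.intervalIntegrable 0 1
    have i2 : IntervalIntegrable (fun t : ℝ => t * (L * ‖d‖ ^ 2)) MeasureTheory.volume 0 1 :=
      (continuous_id.mul continuous_const).intervalIntegrable 0 1
    rw [intervalIntegral.integral_add i1 i2, intervalIntegral.integral_mul_const, integral_id]
    simp; ring
  have hfin : φ 1 - φ 0 ≤ ⟪g a, d⟫ + L / 2 * ‖d‖ ^ 2 := by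
    rw [← hint]; exact hintle.trans_eq hrhs
  have h0 : φ 0 = f a := by simp [hφdef]
  have h1 : φ 1 = f b := by simp [hφdef, hdef]
  linarith
/-- descent of the composite objective `U = F + G` along the
relaxed step `v = x + γ (x̃ - x)`, given the strong-monotonicity inequality. -/
theorem stmt_0 {n : ℕ}
    (K : Set (EuclideanSpace ℝ (Fin n))) (hKne : K.Nonempty) (hKcl : IsClosed K)
    (hKconv : Convex ℝ K)
    (F G : EuclideanSpace ℝ (Fin n) → ℝ)
    (Fgrad : EuclideanSpace ℝ (Fin n) → EuclideanSpace ℝ (Fin n))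
    (L μ : ℝ) (hμ : 0 < μ)
    (hF : ∀ z, HasGradientAt F (Fgrad z) z)
    (hL : ∀ z w, ‖Fgrad z - Fgrad w‖ ≤ L * ‖z - w‖)
    (hG : ConvexOn ℝ K G)
    (x xt : EuclideanSpace ℝ (Fin n)) (hx : x ∈ K) (hxt : xt ∈ K)
    (y : EuclideanSpace ℝ (Fin n))
    (hmono : μ * ‖xt - x‖ ^ 2 ≤ -⟪xt - x, y⟫ + G x - G xt)
    (γ : ℝ) (hγ0 : 0 < γ) (hγ1 : γ ≤ 1) :
    F (x + γ • (xt - x)) + G (x + γ • (xt - x)) ≤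
      F x + G x - γ * (μ - γ * L / 2) * ‖xt - x‖ ^ 2
        + γ * ⟪Fgrad x - y, xt - x⟫ := by
  have hdesc := descent_aux F Fgrad L hF hL x (x + γ • (xt - x))
  have hsub : (x + γ • (xt - x)) - x = γ • (xt - x) := by abel
  rw [hsub] at hdesc
  have hinner : ⟪Fgrad x, γ • (xt - x)⟫ = γ * ⟪Fgrad x, xt - x⟫ :=
    real_inner_smul_right _ _ _
  have hnorm : ‖γ • (xt - x)‖ ^ 2 = γ ^ 2 * ‖xt - x‖ ^ 2 := by
    rw [norm_smul]
    rw [Real.norm_eq_abs, abs_of_pos hγ0]; ring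
  rw [hinner, hnorm] at hdesc
  have hGc : G (x + γ • (xt - x)) ≤ (1 - γ) * G x + γ * G xt := by
    have h := hG.2 hx hxt (by linarith : (0:ℝ) ≤ 1 - γ) hγ0.le (by ring)
    have heq : (1 - γ) • x + γ • xt = x + γ • (xt - x) := by
      rw [smul_sub]; module
    rw [heq] at h
    simpa using h
  have hsL : ⟪Fgrad x - y, xt - x⟫ = ⟪Fgrad x, xt - x⟫ - ⟪y, xt - x⟫ :=
    inner_sub_left _ _ _
  have hyx : ⟪xt - x, y⟫ = ⟪y, xt - x⟫ := real_inner_comm _ _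
  rw [hyx] at hmono
  have hm := mul_le_mul_of_nonneg_left hmono hγ0.le
  rw [hsL]
  nlinarith [hdesc, hGc, hm]
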